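/- Let X be a k-maximal (n,k)-PMD with component probabilities p_{i,j} = Pr[X_i = e_j]. Then for all ξ ∈ [0,1]^k, all 1 ≤ i ≤ n, and all 1 ≤ j ≤ k−1, the Fourier transform of the i-th component satisfies |X̂_i(ξ)|² ≤ exp(−c·p_{i,j}·[ξ_j − ξ_k]²/k) for some universal constant c > 0, where [x] denotes the distance from x to the nearest integer. -/

import Mathlib

private lemma cos_bound' (d : ℝ) : 8 * (d - round d) ^ 2 ≤ 1 - Real.cos (2 * Real.pi * d) := by
  set r : ℝ := d - round d with hr
  have hround : |r| ≤ 1 / 2 := abs_sub_round d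
  have h1 : Real.cos (2 * Real.pi * d) = Real.cos (2 * Real.pi * r) := by
    have : 2 * Real.pi * d = 2 * Real.pi * r + (round d : ℤ) * (2 * Real.pi) := by
      rw [hr]; ring
    rw [this, Real.cos_add_int_mul_two_pi]
  have h2 : Real.cos (2 * Real.pi * r) = 1 - 2 * Real.sin (Real.pi * r) ^ 2 := by
    have e1 := Real.cos_two_mul (Real.pi * r)
    have e2 := Real.sin_sq_add_cos_sq (Real.pi * r)
    have harg : 2 * Real.pi * r = 2 * (Real.pi * r) := by ring
    rw [harg]; linarith
  have hsin : 2 * |r| ≤ Real.sin (Real.pi * |r|) := by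
    have := Real.mul_le_sin (x := Real.pi * |r|) (by positivity)
      (by nlinarith [Real.pi_pos])
    calc 2 * |r| = 2 / Real.pi * (Real.pi * |r|) := by
          field_simp
      _ ≤ _ := this
  have hsq : Real.sin (Real.pi * r) ^ 2 = Real.sin (Real.pi * |r|) ^ 2 := by
    rcases abs_cases r with ⟨h, _⟩ | ⟨h, _⟩
    · rw [h]
    · rw [h]; simp [mul_neg, Real.sin_neg]
  have habs : 0 ≤ |r| := abs_nonneg r
  have : 4 * r ^ 2 ≤ Real.sin (Real.pi * r) ^ 2 := by
    rw [hsq]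
    nlinarith [sq_abs r]
  linarith [h1, h2]

private lemma abs_sq_eq' (k : ℕ) (p ξ : Fin k → ℝ) :
    ‖∑ l, (p l : ℂ) * Complex.exp (-(2 * Real.pi * Complex.I) * ξ l)‖ ^ 2
    = ∑ l, ∑ m, p l * p m * Real.cos (2 * Real.pi * (ξ l - ξ m)) := by
  have h : ∀ l, (p l : ℂ) * Complex.exp (-(2 * Real.pi * Complex.I) * ξ l)
      = Complex.ofReal (p l * Real.cos (2 * Real.pi * ξ l))
        + Complex.ofReal (-(p l * Real.sin (2 * Real.pi * ξ l))) * Complex.I := by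
    intro l
    have : (-(2 * Real.pi * Complex.I) * ξ l) = ((-(2 * Real.pi * ξ l) : ℝ) : ℂ) * Complex.I := by
      push_cast; ring
    rw [this, Complex.exp_mul_I, ← Complex.ofReal_cos, ← Complex.ofReal_sin]
    push_cast
    simp [Real.cos_neg, Real.sin_neg]
    ring
  simp only [h]
  rw [Complex.sq_norm, Complex.normSq_apply]
  simp only [Complex.add_re, Complex.add_im, Complex.ofReal_re, Complex.ofReal_im,
    Complex.mul_re, Complex.mul_im, Complex.I_re, Complex.I_im, Complex.re_sum, Complex.im_sum]
  simp only [mul_zero, mul_one, zero_mul, sub_zero, add_zero, zero_add]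
  rw [Finset.sum_mul_sum, Finset.sum_mul_sum, ← Finset.sum_add_distrib]
  refine Finset.sum_congr rfl fun l _ => ?_
  rw [← Finset.sum_add_distrib]
  refine Finset.sum_congr rfl fun m _ => ?_
  rw [mul_sub, Real.cos_sub]
  ring

/-- Let `X` be a `k`-maximal `(n,k)`-PMD with component probabilities
`p_{i,j} = Pr[X_i = e_j]` (here we state the claim for a single `k`-maximal component,
whose maximal coordinate is the `k`-th, i.e. the last one). There is a universal constant
`c > 0` such that for all `ξ ∈ [0,1]^k` and all `1 ≤ j ≤ k−1`,
`|X̂_i(ξ)|² ≤ exp(−c·p_{i,j}·[ξ_j − ξ_k]²/k)`, where `[x]` denotes the distance from `x`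
to the nearest integer. -/
theorem stmt11 :
    ∃ c : ℝ, 0 < c ∧
    ∀ (k : ℕ) (hk : 0 < k) (p : Fin k → ℝ) (ξ : Fin k → ℝ),
      (∀ j, 0 ≤ p j) → (∑ j, p j) = 1 →
      (∀ j, p j ≤ p ⟨k - 1, by omega⟩) →
      (∀ j, ξ j ∈ Set.Icc (0 : ℝ) 1) →
      ∀ j : Fin k, (j : ℕ) < k - 1 →
      ‖∑ l, (p l : ℂ) * Complex.exp (-(2 * Real.pi * Complex.I) * ξ l)‖ ^ 2
        ≤ Real.exp (-(c * p j *
            |ξ j - ξ ⟨k - 1, by omega⟩ - (round (ξ j - ξ ⟨k - 1, by omega⟩) : ℝ)| ^ 2 / k)) := by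
  refine ⟨16, by norm_num, ?_⟩
  intro k hk p ξ hp hsum hmax hξ j hj
  set K : Fin k := ⟨k - 1, by omega⟩ with hK
  have hjK : j ≠ K := by
    intro h
    rw [h] at hj
    simp [hK] at hj
  set d : ℝ := ξ j - ξ K with hd
  set r : ℝ := d - round d with hrdef
  -- the Fourier identity
  rw [abs_sq_eq' k p ξ]
  -- nonnegativity of the "defect" terms
  have hterm : ∀ l m : Fin k, 0 ≤ p l * p m * (1 - Real.cos (2 * Real.pi * (ξ l - ξ m))) := by
    intro l m
    have h := Real.cos_le_one (2 * Real.pi * (ξ l - ξ m))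
    exact mul_nonneg (mul_nonneg (hp l) (hp m)) (by linarith)
  -- |S|² = 1 - T
  have hsplit : ∑ l, ∑ m, p l * p m * Real.cos (2 * Real.pi * (ξ l - ξ m))
      = 1 - ∑ l, ∑ m, p l * p m * (1 - Real.cos (2 * Real.pi * (ξ l - ξ m))) := by
    have h1 : (∑ l, ∑ m, p l * p m : ℝ) = 1 := by
      rw [← Finset.sum_mul_sum, hsum, one_mul]
    have hAT : (∑ l, ∑ m, p l * p m * Real.cos (2 * Real.pi * (ξ l - ξ m)))
        + (∑ l, ∑ m, p l * p m * (1 - Real.cos (2 * Real.pi * (ξ l - ξ m))))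
        = ∑ l, ∑ m, p l * p m := by
      rw [← Finset.sum_add_distrib]
      refine Finset.sum_congr rfl fun l _ => ?_
      rw [← Finset.sum_add_distrib]
      refine Finset.sum_congr rfl fun m _ => ?_
      ring
    rw [h1] at hAT
    linarith
  rw [hsplit]
  -- lower bound T by the two (j,K) terms
  set T : ℝ := ∑ l, ∑ m, p l * p m * (1 - Real.cos (2 * Real.pi * (ξ l - ξ m))) with hT
  have hpK : 1 / (k : ℝ) ≤ p K := by
    have hcard : (∑ _l : Fin k, p K) = k * p K := by
      simp [Finset.sum_const, nsmul_eq_mul]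
    have hle : (1 : ℝ) ≤ k * p K := by
      rw [← hsum, ← hcard]
      exact Finset.sum_le_sum fun l _ => hmax l
    have hk' : (0 : ℝ) < k := by exact_mod_cast hk
    rw [div_le_iff₀ hk']
    linarith
  have hTlow : 2 * p j * p K * (1 - Real.cos (2 * Real.pi * d)) ≤ T := by
    have hsub : ({j, K} : Finset (Fin k)) ⊆ Finset.univ := Finset.subset_univ _
    have hinner : ∀ l : Fin k, 0 ≤ ∑ m, p l * p m * (1 - Real.cos (2 * Real.pi * (ξ l - ξ m))) :=
      fun l => Finset.sum_nonneg fun m _ => hterm l m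
    have h1 : ∑ l ∈ ({j, K} : Finset (Fin k)),
        (∑ m, p l * p m * (1 - Real.cos (2 * Real.pi * (ξ l - ξ m)))) ≤ T :=
      Finset.sum_le_sum_of_subset_of_nonneg hsub (fun l _ _ => hinner l)
    rw [Finset.sum_pair hjK] at h1
    have h2 : p j * p K * (1 - Real.cos (2 * Real.pi * (ξ j - ξ K)))
        ≤ ∑ m, p j * p m * (1 - Real.cos (2 * Real.pi * (ξ j - ξ m))) :=
      Finset.single_le_sum (fun m _ => hterm j m) (Finset.mem_univ K)
    have h3 : p K * p j * (1 - Real.cos (2 * Real.pi * (ξ K - ξ j)))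
        ≤ ∑ m, p K * p m * (1 - Real.cos (2 * Real.pi * (ξ K - ξ m))) :=
      Finset.single_le_sum (fun m _ => hterm K m) (Finset.mem_univ j)
    have hcos : Real.cos (2 * Real.pi * (ξ K - ξ j)) = Real.cos (2 * Real.pi * (ξ j - ξ K)) := by
      rw [← Real.cos_neg]; ring_nf
    rw [hcos] at h3
    rw [hd]
    linarith
  have hcosb : 8 * r ^ 2 ≤ 1 - Real.cos (2 * Real.pi * d) := cos_bound' d
  have hk' : (0 : ℝ) < k := by exact_mod_cast hk
  have habs : |r| ^ 2 = r ^ 2 := sq_abs r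
  have hpj : 0 ≤ p j := hp j
  have hr2 : (0 : ℝ) ≤ r ^ 2 := sq_nonneg r
  -- key bound: 16 * p j * r^2 / k ≤ T
  have hfinal : 16 * p j * r ^ 2 / k ≤ T := by
    have step1 : 2 * p j * (1 / (k : ℝ)) * (8 * r ^ 2)
        ≤ 2 * p j * p K * (1 - Real.cos (2 * Real.pi * d)) := by
      have h1 : 2 * p j * (1 / (k : ℝ)) ≤ 2 * p j * p K := by
        have : 0 ≤ 2 * p j := by linarith
        exact mul_le_mul_of_nonneg_left hpK this
      exact mul_le_mul h1 hcosb (by positivity)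
        (mul_nonneg (by linarith) (hp K))
    have heq : 2 * p j * (1 / (k : ℝ)) * (8 * r ^ 2) = 16 * p j * r ^ 2 / k := by
      field_simp; ring
    linarith
  calc 1 - T ≤ 1 - 16 * p j * r ^ 2 / k := by linarith
    _ ≤ Real.exp (-(16 * p j * r ^ 2 / k)) := by
        have := Real.add_one_le_exp (-(16 * p j * r ^ 2 / k))
        linarith
    _ = Real.exp (-(16 * p j * |r| ^ 2 / k)) := by rw [habs]
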